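/- arXiv:2509.12637 — 2 statements merged into one kernel-verified Lean document; each statement's English description precedes it below -/
import Mathlib

section
/- Let n be a positive natural number and let (E_α)_{α ∈ A} be a finite family of n×n positive semidefinite complex matrices with Σ_α E_α = I, and define the bare measurement channel Φ(ρ) = Σ_α √E_α ρ √E_α. If an n×n complex matrix ρ satisfies ‖Φ(ρ)‖_F = ‖ρ‖_F, then ρ commutes with E_α for every α ∈ A. -/
open Matrix
open scoped ComplexOrder

/-- The Frobenius (Hilbert–Schmidt) norm `‖A‖_F = √(Tr(A†A))`. -/
noncomputable def frobNorm {n : ℕ} (A : Matrix (Fin n) (Fin n) ℂ) : ℝ :=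
  Real.sqrt ((Aᴴ * A).trace).re

/-- The positive semidefinite square root of a positive semidefinite matrix, with the
definition `Matrix.PosSemidef.sqrt` had in Mathlib of December 2024 (since removed). -/
noncomputable def Matrix.PosSemidef.sqrt {m : Type*} [Fintype m] [DecidableEq m]
    {A : Matrix m m ℂ} (hA : A.PosSemidef) : Matrix m m ℂ :=
  hA.1.eigenvectorUnitary.1 * diagonal ((↑) ∘ (√·) ∘ hA.1.eigenvalues) *
    (star hA.1.eigenvectorUnitary : Matrix m m ℂ)

lemma psd_sqrt_isHermitian {m : Type*} [Fintype m] [DecidableEq m]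
    {A : Matrix m m ℂ} (hA : A.PosSemidef) : (hA.sqrt)ᴴ = hA.sqrt := by
  unfold Matrix.PosSemidef.sqrt
  rw [conjTranspose_mul, conjTranspose_mul, diagonal_conjTranspose]
  simp only [mul_assoc]
  congr 2
  · ext i
    simp
  · simp [Matrix.star_eq_conjTranspose]

lemma psd_sqrt_mul_self {m : Type*} [Fintype m] [DecidableEq m]
    {A : Matrix m m ℂ} (hA : A.PosSemidef) : hA.sqrt * hA.sqrt = A := by
  unfold Matrix.PosSemidef.sqrt
  have hU : (star hA.1.eigenvectorUnitary : Matrix m m ℂ) * hA.1.eigenvectorUnitary.1 = 1 :=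
    Unitary.coe_star_mul_self _
  conv_rhs => rw [hA.1.spectral_theorem, Unitary.conjStarAlgAut_apply]
  calc _ = hA.1.eigenvectorUnitary.1 * diagonal ((↑) ∘ (√·) ∘ hA.1.eigenvalues) *
        ((star hA.1.eigenvectorUnitary : Matrix m m ℂ) * hA.1.eigenvectorUnitary.1) *
        diagonal ((↑) ∘ (√·) ∘ hA.1.eigenvalues) *
        (star hA.1.eigenvectorUnitary : Matrix m m ℂ) := by simp only [mul_assoc]
    _ = _ := by
      rw [hU, mul_one, mul_assoc _ (diagonal _) (diagonal _), diagonal_mul_diagonal]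
      congr 3
      ext i
      simp only [Function.comp_apply]
      rw [← Complex.ofReal_mul, Real.mul_self_sqrt (hA.eigenvalues_nonneg i)]
      rfl

lemma trace_sq_re {n : ℕ} (A : Matrix (Fin n) (Fin n) ℂ) :
    ((Aᴴ * A).trace).re = ∑ i, ∑ j, Complex.normSq (A j i) := by
  simp only [Matrix.trace, Matrix.diag, Matrix.mul_apply, Matrix.conjTranspose_apply]
  rw [Complex.re_sum]
  refine Finset.sum_congr rfl fun i _ => ?_
  rw [Complex.re_sum]
  refine Finset.sum_congr rfl fun j _ => ?_
  simp [Complex.normSq_apply, Complex.mul_re]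

lemma trace_sq_re_nonneg {n : ℕ} (A : Matrix (Fin n) (Fin n) ℂ) :
    0 ≤ ((Aᴴ * A).trace).re := by
  rw [trace_sq_re]
  exact Finset.sum_nonneg fun i _ => Finset.sum_nonneg fun j _ => Complex.normSq_nonneg _

lemma eq_zero_of_trace_sq_re {n : ℕ} (A : Matrix (Fin n) (Fin n) ℂ)
    (h : ((Aᴴ * A).trace).re = 0) : A = 0 := by
  rw [trace_sq_re] at h
  ext j i
  have h1 := (Finset.sum_eq_zero_iff_of_nonneg (fun i _ =>
    Finset.sum_nonneg fun j _ => Complex.normSq_nonneg _)).mp h i (Finset.mem_univ i)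
  have h2 := (Finset.sum_eq_zero_iff_of_nonneg (fun j _ =>
    Complex.normSq_nonneg _)).mp h1 j (Finset.mem_univ j)
  simpa using Complex.normSq_eq_zero.mp h2

set_option maxHeartbeats 1000000 in
theorem stmt_5 (n : ℕ) (hn : 0 < n) (k : ℕ)
    (E : Fin k → Matrix (Fin n) (Fin n) ℂ)
    (hE : ∀ α, (E α).PosSemidef)
    (hsum : ∑ α, E α = 1)
    (Φ : Matrix (Fin n) (Fin n) ℂ → Matrix (Fin n) (Fin n) ℂ)
    (hΦ : ∀ ρ, Φ ρ = ∑ α, (hE α).sqrt * ρ * (hE α).sqrt)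
    (ρ : Matrix (Fin n) (Fin n) ℂ)
    (heq : frobNorm (Φ ρ) = frobNorm ρ) :
    ∀ α, ρ * E α = E α * ρ := by
  classical
  set S : Fin k → Matrix (Fin n) (Fin n) ℂ := fun α => (hE α).sqrt with hSdef
  have hSH : ∀ α, (S α)ᴴ = S α := fun α => psd_sqrt_isHermitian (hE α)
  have hS2 : ∀ α, S α * S α = E α := fun α => psd_sqrt_mul_self (hE α)
  have hsum1 : (∑ α, S α * S α) = 1 := by
    rw [← hsum]; exact Finset.sum_congr rfl fun α _ => hS2 α
  have hΦ' : ∀ X, Φ X = ∑ α, S α * X * S α := hΦ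
  have collapseL : ∀ X : Matrix (Fin n) (Fin n) ℂ, (∑ α, S α * (S α * X)) = X := by
    intro X
    calc (∑ α, S α * (S α * X)) = (∑ α, S α * S α) * X := by
          rw [Finset.sum_mul]; simp only [mul_assoc]
      _ = X := by rw [hsum1, one_mul]
  -- adjointness of Φ w.r.t. HS inner product
  have hadj : ∀ A B : Matrix (Fin n) (Fin n) ℂ,
      ((Φ A)ᴴ * B).trace = (Aᴴ * Φ B).trace := by
    intro A B
    rw [hΦ' A, hΦ' B, conjTranspose_sum]
    rw [Finset.sum_mul, Matrix.trace_sum, Finset.mul_sum, Matrix.trace_sum]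
    refine Finset.sum_congr rfl fun α _ => ?_
    simp only [conjTranspose_mul, hSH]
    rw [Matrix.trace_mul_comm]
    simp only [mul_assoc]
    rw [Matrix.trace_mul_comm]
    simp only [mul_assoc]
    rw [Matrix.trace_mul_comm]
    simp only [mul_assoc]
  set D : Fin k → Fin k → Matrix (Fin n) (Fin n) ℂ :=
    fun α β => S α * S β * ρ - ρ * (S α * S β) with hD
  -- expansion of each trace
  have expand : ∀ α β, ((D α β)ᴴ * D α β).trace =
        (ρᴴ * (S β * (S α * (S α * (S β * ρ))))).trace
      + (ρᴴ * (ρ * (S α * (S β * (S β * S α))))).trace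
      - (ρᴴ * (S β * (S α * (ρ * (S α * S β))))).trace
      - ((S β * (S α * (ρᴴ * (S α * S β)))) * ρ).trace := by
    intro α β
    have ht22 : ((S β * (S α * (ρᴴ * (ρ * (S α * S β))))) : Matrix (Fin n) (Fin n) ℂ).trace
        = (ρᴴ * (ρ * (S α * (S β * (S β * S α))))).trace := by
      rw [Matrix.trace_mul_comm]
      simp only [mul_assoc]
      rw [Matrix.trace_mul_comm]
      simp only [mul_assoc]
    simp only [hD, conjTranspose_sub, conjTranspose_mul, hSH, sub_mul, mul_sub,
      Matrix.trace_sub, mul_assoc]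
    rw [ht22]
    ring
  -- summed identities
  have h1 : (∑ α, ∑ β, (ρᴴ * (S β * (S α * (S α * (S β * ρ))))).trace)
      = (ρᴴ * ρ).trace := by
    rw [Finset.sum_comm]
    have inner : ∀ β : Fin k, (∑ α, ρᴴ * (S β * (S α * (S α * (S β * ρ)))))
        = ρᴴ * (S β * (S β * ρ)) := by
      intro β
      simp only [← Finset.mul_sum]
      rw [collapseL (S β * ρ)]
    calc (∑ β, ∑ α, (ρᴴ * (S β * (S α * (S α * (S β * ρ))))).trace)
        = ∑ β, (ρᴴ * (S β * (S β * ρ))).trace := by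
          refine Finset.sum_congr rfl fun β _ => ?_
          rw [← Matrix.trace_sum, inner β]
      _ = (ρᴴ * ρ).trace := by
          rw [← Matrix.trace_sum]
          simp only [← Finset.mul_sum]
          rw [collapseL ρ]
  have h2 : (∑ α, ∑ β, (ρᴴ * (ρ * (S α * (S β * (S β * S α))))).trace)
      = (ρᴴ * ρ).trace := by
    have inner : ∀ α : Fin k, (∑ β, ρᴴ * (ρ * (S α * (S β * (S β * S α)))))
        = ρᴴ * (ρ * (S α * S α)) := by
      intro α
      simp only [← Finset.mul_sum]
      rw [collapseL (S α)]
    calc (∑ α, ∑ β, (ρᴴ * (ρ * (S α * (S β * (S β * S α))))).trace)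
        = ∑ α, (ρᴴ * (ρ * (S α * S α))).trace := by
          refine Finset.sum_congr rfl fun α _ => ?_
          rw [← Matrix.trace_sum, inner α]
      _ = (ρᴴ * ρ).trace := by
          rw [← Matrix.trace_sum]
          simp only [← Finset.mul_sum]
          rw [hsum1, mul_one]
  have h3 : (∑ α, ∑ β, (ρᴴ * (S β * (S α * (ρ * (S α * S β))))).trace)
      = (ρᴴ * Φ (Φ ρ)).trace := by
    rw [Finset.sum_comm, hΦ' (Φ ρ), hΦ' ρ]
    simp only [Finset.mul_sum, Finset.sum_mul, Matrix.trace_sum, mul_assoc]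
  have h4 : (∑ α, ∑ β, ((S β * (S α * (ρᴴ * (S α * S β)))) * ρ).trace)
      = ((Φ (Φ ρ))ᴴ * ρ).trace := by
    have hherm : ∀ X : Matrix (Fin n) (Fin n) ℂ, (Φ X)ᴴ = Φ (Xᴴ) := by
      intro X
      rw [hΦ' X, hΦ' (Xᴴ), conjTranspose_sum]
      refine Finset.sum_congr rfl fun α _ => ?_
      simp only [conjTranspose_mul, hSH, mul_assoc]
    rw [Finset.sum_comm, hherm, hherm, hΦ' (Φ (ρᴴ)), hΦ' (ρᴴ)]
    simp only [Finset.mul_sum, Finset.sum_mul, Matrix.trace_sum, mul_assoc]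
  -- total complex identity
  have htot : (∑ α, ∑ β, ((D α β)ᴴ * D α β).trace)
      = (ρᴴ * ρ).trace + (ρᴴ * ρ).trace
        - ((Φ ρ)ᴴ * Φ ρ).trace - ((Φ ρ)ᴴ * Φ ρ).trace := by
    have e1 : (ρᴴ * Φ (Φ ρ)).trace = ((Φ ρ)ᴴ * Φ ρ).trace := (hadj ρ (Φ ρ)).symm
    have e2 : ((Φ (Φ ρ))ᴴ * ρ).trace = ((Φ ρ)ᴴ * Φ ρ).trace := hadj (Φ ρ) ρ
    calc (∑ α, ∑ β, ((D α β)ᴴ * D α β).trace)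
        = ∑ α, ∑ β, ((ρᴴ * (S β * (S α * (S α * (S β * ρ))))).trace
          + (ρᴴ * (ρ * (S α * (S β * (S β * S α))))).trace
          - (ρᴴ * (S β * (S α * (ρ * (S α * S β))))).trace
          - ((S β * (S α * (ρᴴ * (S α * S β)))) * ρ).trace) :=
          Finset.sum_congr rfl fun α _ => Finset.sum_congr rfl fun β _ => expand α β
      _ = (∑ α, ∑ β, (ρᴴ * (S β * (S α * (S α * (S β * ρ))))).trace)
          + (∑ α, ∑ β, (ρᴴ * (ρ * (S α * (S β * (S β * S α))))).trace)
          - (∑ α, ∑ β, (ρᴴ * (S β * (S α * (ρ * (S α * S β))))).trace)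
          - (∑ α, ∑ β, ((S β * (S α * (ρᴴ * (S α * S β)))) * ρ).trace) := by
          simp only [Finset.sum_add_distrib, Finset.sum_sub_distrib]
      _ = _ := by rw [h1, h2, h3, h4, e1, e2]
  -- the real part is zero
  have hre : ((Φ ρ)ᴴ * Φ ρ).trace.re = (ρᴴ * ρ).trace.re := by
    have a1 := trace_sq_re_nonneg (Φ ρ)
    have a2 := trace_sq_re_nonneg ρ
    unfold frobNorm at heq
    rw [← Real.sq_sqrt a1, ← Real.sq_sqrt a2, heq]
  have hzero : (∑ α, ∑ β, (((D α β)ᴴ * D α β).trace).re) = 0 := by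
    have hcast : (∑ α, ∑ β, (((D α β)ᴴ * D α β).trace).re)
        = ((∑ α, ∑ β, ((D α β)ᴴ * D α β).trace)).re := by
      rw [Complex.re_sum]
      exact Finset.sum_congr rfl fun α _ => (Complex.re_sum _ _).symm
    rw [hcast, htot]
    simp only [Complex.sub_re, Complex.add_re]
    rw [hre]
    ring
  -- each D α β vanishes
  have hDzero : ∀ α β, D α β = 0 := by
    intro α β
    have hnn : ∀ a ∈ (Finset.univ : Finset (Fin k)),
        0 ≤ ∑ β, (((D a β)ᴴ * D a β).trace).re := fun a _ =>
      Finset.sum_nonneg fun β _ => trace_sq_re_nonneg _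
    have h5 := (Finset.sum_eq_zero_iff_of_nonneg hnn).mp hzero α (Finset.mem_univ α)
    have h6 := (Finset.sum_eq_zero_iff_of_nonneg
      (fun b _ => trace_sq_re_nonneg (D α b))).mp h5 β (Finset.mem_univ β)
    exact eq_zero_of_trace_sq_re _ h6
  intro γ
  have hγ := hDzero γ γ
  simp only [hD] at hγ
  have h7 : S γ * S γ * ρ = ρ * (S γ * S γ) := sub_eq_zero.mp hγ
  rw [hS2] at h7
  exact h7.symm
end

section
/- Let n be a positive natural number, let Φ₁, …, Φ_N be bare measurement channels on n×n complex matrices, let Φ = Φ_N ∘ ⋯ ∘ Φ₁, and let Φ̄ denote its entrywise conjugate, i.e. Φ̄(ρ) = conj(Φ(conj ρ)) where conj takes the entrywise complex conjugate of a matrix. Then there is no invertible complex-linear map 𝒰 on n×n complex matrices such that 𝒰 ∘ Φ̄ = (−Φ) ∘ 𝒰. (In other words, bare measurement feedback processes are incompatible with K symmetry with ε_K = −1.) -/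
open Matrix
open scoped ComplexOrder

/-- A bare measurement channel: `Φ(ρ) = Σ_α √E_α ρ √E_α` for some POVM `(E_α)`. -/
def IsBareChannel {n : ℕ}
    (Φ : Matrix (Fin n) (Fin n) ℂ → Matrix (Fin n) (Fin n) ℂ) : Prop :=
  ∃ (k : ℕ) (E : Fin k → Matrix (Fin n) (Fin n) ℂ)
    (hE : ∀ α, (E α).PosSemidef),
      (∑ α, E α) = 1 ∧ ∀ ρ, Φ ρ = ∑ α, ((hE α).1.eigenvectorUnitary.1 * diagonal ((↑) ∘ Real.sqrt ∘ (hE α).1.eigenvalues : Fin n → ℂ) *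
        (star (hE α).1.eigenvectorUnitary : Matrix (Fin n) (Fin n) ℂ)) * ρ *
        ((hE α).1.eigenvectorUnitary.1 * diagonal ((↑) ∘ Real.sqrt ∘ (hE α).1.eigenvalues : Fin n → ℂ) *
        (star (hE α).1.eigenvectorUnitary : Matrix (Fin n) (Fin n) ℂ))

/-- Hilbert–Schmidt inner product of matrices. -/
noncomputable def ip {n : ℕ} (X Y : Matrix (Fin n) (Fin n) ℂ) : ℂ := (Xᴴ * Y).trace

namespace Stmt9Aux

variable {n : ℕ}

/-- The positive square root written out through the spectral decomposition. -/
noncomputable def sq {A : Matrix (Fin n) (Fin n) ℂ} (h : A.PosSemidef) : Matrix (Fin n) (Fin n) ℂ :=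
  h.1.eigenvectorUnitary.1 * diagonal ((↑) ∘ Real.sqrt ∘ h.1.eigenvalues : Fin n → ℂ) *
    (star h.1.eigenvectorUnitary : Matrix (Fin n) (Fin n) ℂ)

lemma sq_psd {A : Matrix (Fin n) (Fin n) ℂ} (h : A.PosSemidef) : (sq h).PosSemidef := by
  have hd : (diagonal ((↑) ∘ Real.sqrt ∘ h.1.eigenvalues : Fin n → ℂ)).PosSemidef := by
    rw [posSemidef_diagonal_iff]
    intro i
    simp [Real.sqrt_nonneg]
  have := hd.mul_mul_conjTranspose_same h.1.eigenvectorUnitary.1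
  unfold sq
  simpa [Matrix.star_eq_conjTranspose] using this

lemma sq_mul_self {A : Matrix (Fin n) (Fin n) ℂ} (h : A.PosSemidef) : sq h * sq h = A := by
  have hU : (star h.1.eigenvectorUnitary : Matrix (Fin n) (Fin n) ℂ) * h.1.eigenvectorUnitary.1 = 1 :=
    Unitary.coe_star_mul_self _
  have hD : diagonal ((↑) ∘ Real.sqrt ∘ h.1.eigenvalues : Fin n → ℂ) *
      diagonal ((↑) ∘ Real.sqrt ∘ h.1.eigenvalues : Fin n → ℂ)
      = diagonal (RCLike.ofReal ∘ h.1.eigenvalues) := by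
    rw [diagonal_mul_diagonal]
    congr 1
    funext i
    simp only [Function.comp_apply]
    rw [← Complex.ofReal_mul, Real.mul_self_sqrt (h.eigenvalues_nonneg i)]
    rfl
  conv_rhs => rw [h.1.spectral_theorem, Unitary.conjStarAlgAut_apply]
  unfold sq
  rw [show h.1.eigenvectorUnitary.1 * diagonal ((↑) ∘ Real.sqrt ∘ h.1.eigenvalues : Fin n → ℂ) *
      (star h.1.eigenvectorUnitary : Matrix (Fin n) (Fin n) ℂ) *
      (h.1.eigenvectorUnitary.1 * diagonal ((↑) ∘ Real.sqrt ∘ h.1.eigenvalues : Fin n → ℂ) *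
      (star h.1.eigenvectorUnitary : Matrix (Fin n) (Fin n) ℂ))
      = h.1.eigenvectorUnitary.1 * (diagonal ((↑) ∘ Real.sqrt ∘ h.1.eigenvalues : Fin n → ℂ) *
      ((star h.1.eigenvectorUnitary : Matrix (Fin n) (Fin n) ℂ) * h.1.eigenvectorUnitary.1) *
      diagonal ((↑) ∘ Real.sqrt ∘ h.1.eigenvalues : Fin n → ℂ)) *
      (star h.1.eigenvectorUnitary : Matrix (Fin n) (Fin n) ℂ) by simp only [Matrix.mul_assoc],
    hU, Matrix.mul_one, hD]

lemma trace_nonneg' {A : Matrix (Fin n) (Fin n) ℂ} (h : A.PosSemidef) : 0 ≤ A.trace := by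
  exact h.trace_nonneg

lemma ip_self_nonneg (X : Matrix (Fin n) (Fin n) ℂ) : 0 ≤ ip X X :=
  trace_nonneg' (Matrix.posSemidef_conjTranspose_mul_self X)

lemma ip_self_eq_zero {X : Matrix (Fin n) (Fin n) ℂ} (h : ip X X = 0) : X = 0 := by
  have hrw : ip X X = ((∑ i, ∑ j, Complex.normSq (X j i) : ℝ) : ℂ) := by
    simp only [ip, Matrix.trace, Matrix.diag, Matrix.mul_apply, Matrix.conjTranspose_apply]
    push_cast
    congr 1; ext i; congr 1; ext j
    rw [Complex.normSq_eq_conj_mul_self]; rfl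
  rw [hrw] at h
  have h0 : (∑ i, ∑ j, Complex.normSq (X j i) : ℝ) = 0 := by exact_mod_cast h
  have : ∀ i ∈ Finset.univ, ∀ j ∈ Finset.univ, Complex.normSq (X j i) = 0 := by
    intro i _ j _
    have h1 := Finset.sum_eq_zero_iff_of_nonneg (fun i _ => Finset.sum_nonneg
      (fun j _ => Complex.normSq_nonneg (X j i))) |>.mp h0 i (Finset.mem_univ i)
    exact Finset.sum_eq_zero_iff_of_nonneg (fun j _ => Complex.normSq_nonneg (X j i)) |>.mp h1 j
      (Finset.mem_univ j)
  ext j i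
  simpa using Complex.normSq_eq_zero.mp (this i (Finset.mem_univ i) j (Finset.mem_univ j))

lemma ip_sub_left (X Y W : Matrix (Fin n) (Fin n) ℂ) : ip (X - Y) W = ip X W - ip Y W := by
  simp [ip, Matrix.conjTranspose_sub, Matrix.sub_mul, Matrix.trace_sub]

lemma ip_sub_right (X Y W : Matrix (Fin n) (Fin n) ℂ) : ip W (X - Y) = ip W X - ip W Y := by
  simp [ip, Matrix.mul_sub, Matrix.trace_sub]

lemma ip_conj (X Y : Matrix (Fin n) (Fin n) ℂ) : ip Y X = starRingEnd ℂ (ip X Y) := by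
  have h : (Yᴴ * X) = (Xᴴ * Y)ᴴ := by simp [Matrix.conjTranspose_mul]
  rw [ip, h, Matrix.trace_conjTranspose]; rfl

/-- The properties of a channel that we need. -/
def GoodChan (P : Matrix (Fin n) (Fin n) ℂ → Matrix (Fin n) (Fin n) ℂ) : Prop :=
  P 1 = 1 ∧ ∀ X, ip (P X) (P X) ≤ ip X X ∧ (ip (P X) (P X) = ip X X → P X = X)

section Chan

variable {k : ℕ} (S : Fin k → Matrix (Fin n) (Fin n) ℂ)

/-- Self-adjointness of a bare channel w.r.t. the HS inner product. -/
lemma chan_selfadj (hS : ∀ α, (S α)ᴴ = S α)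
    (X Y : Matrix (Fin n) (Fin n) ℂ) :
    ip Y (∑ α, S α * X * S α) = ip (∑ α, S α * Y * S α) X := by
  simp only [ip, Matrix.mul_sum, Matrix.sum_mul, Matrix.trace_sum, Matrix.conjTranspose_sum,
    Matrix.conjTranspose_mul, hS]
  congr 1; ext α
  rw [show Yᴴ * (S α * X * S α) = Yᴴ * (S α * X) * S α from by simp [Matrix.mul_assoc],
     Matrix.trace_mul_comm]
  simp [Matrix.mul_assoc]

/-- Positivity of the quadratic form of a bare channel. -/
lemma chan_pos (hS : ∀ α, (S α).PosSemidef)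
    (X : Matrix (Fin n) (Fin n) ℂ) :
    0 ≤ ip X (∑ α, S α * X * S α) := by
  rw [ip, Matrix.mul_sum, Matrix.trace_sum]
  apply Finset.sum_nonneg
  intro α _
  set T := sq (hS α) with hT
  have hTT : T * T = S α := sq_mul_self (hS α)
  have hTh : Tᴴ = T := (sq_psd (hS α)).1
  have key : Xᴴ * (S α * X * S α) = (Xᴴ * (T * (T * (X * T)))) * T := by
    rw [← hTT]; noncomm_ring
  rw [key, Matrix.trace_mul_comm]
  have h2 : T * (Xᴴ * (T * (T * (X * T)))) = (T * X * T)ᴴ * (T * X * T) := by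
    simp [Matrix.conjTranspose_mul, hTh, Matrix.mul_assoc]
  rw [h2]
  exact trace_nonneg' (Matrix.posSemidef_conjTranspose_mul_self _)

/-- The quadratic form of a bare channel is dominated by the identity. -/
lemma chan_contr (hS : ∀ α, (S α)ᴴ = S α) (hsum : ∑ α, S α * S α = 1)
    (X : Matrix (Fin n) (Fin n) ℂ) :
    ip X (∑ α, S α * X * S α) ≤ ip X X := by
  have expand : ∀ α, (0:ℂ) ≤ ((S α * X - X * S α)ᴴ * (S α * X - X * S α)).trace :=
    fun α => trace_nonneg' (Matrix.posSemidef_conjTranspose_mul_self _)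
  have expand2 : ∀ α, ((S α * X - X * S α)ᴴ * (S α * X - X * S α)).trace
      = (Xᴴ * (S α * S α) * X).trace + (Xᴴ * X * (S α * S α)).trace
        - 2 * (Xᴴ * (S α * X * S α)).trace := by
    intro α
    have h1 : (S α * X - X * S α)ᴴ = Xᴴ * S α - S α * Xᴴ := by
      simp [Matrix.conjTranspose_sub, Matrix.conjTranspose_mul, hS]
    rw [h1, Matrix.sub_mul, Matrix.mul_sub, Matrix.mul_sub, Matrix.trace_sub, Matrix.trace_sub,
      Matrix.trace_sub]
    have c1 : (S α * Xᴴ * (S α * X)).trace = (Xᴴ * (S α * X * S α)).trace := by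
      rw [show S α * Xᴴ * (S α * X) = S α * (Xᴴ * (S α * X)) from by simp [Matrix.mul_assoc],
        Matrix.trace_mul_comm]
      simp [Matrix.mul_assoc]
    have c2 : (S α * Xᴴ * (X * S α)).trace = (Xᴴ * X * (S α * S α)).trace := by
      rw [show S α * Xᴴ * (X * S α) = S α * (Xᴴ * (X * S α)) from by simp [Matrix.mul_assoc],
        Matrix.trace_mul_comm]
      simp [Matrix.mul_assoc]
    have c3 : (Xᴴ * S α * (S α * X)).trace = (Xᴴ * (S α * S α) * X).trace := by
      simp [Matrix.mul_assoc]
    have c4 : (Xᴴ * S α * (X * S α)).trace = (Xᴴ * (S α * X * S α)).trace := by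
      simp [Matrix.mul_assoc]
    rw [c1, c2, c3, c4]; ring
  have half : (2:ℂ) * ip X X
      = ∑ α, ((Xᴴ * (S α * S α) * X).trace + (Xᴴ * X * (S α * S α)).trace) := by
    rw [Finset.sum_add_distrib]
    have l1 : ∑ α, (Xᴴ * (S α * S α) * X).trace = ip X X := by
      rw [← Matrix.trace_sum, ← Matrix.sum_mul, ← Matrix.mul_sum, hsum, Matrix.mul_one, ip]
    have l2 : ∑ α, (Xᴴ * X * (S α * S α)).trace = ip X X := by
      rw [← Matrix.trace_sum, ← Matrix.mul_sum, hsum, Matrix.mul_one, ip]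
    rw [l1, l2]; ring
  have sum_nn : (0:ℂ) ≤ ∑ α, (((S α * X - X * S α)ᴴ * (S α * X - X * S α)).trace) :=
    Finset.sum_nonneg (fun α _ => expand α)
  have this2 : (0:ℂ) ≤ 2 * ip X X - 2 * ip X (∑ α, S α * X * S α) := by
    have e : ∑ α, (((S α * X - X * S α)ᴴ * (S α * X - X * S α)).trace)
        = 2 * ip X X - 2 * ip X (∑ α, S α * X * S α) := by
      rw [Finset.sum_congr rfl (fun α _ => expand2 α)]
      rw [show ip X (∑ α, S α * X * S α) = ∑ α, (Xᴴ * (S α * X * S α)).trace from by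
        rw [ip, Matrix.mul_sum, Matrix.trace_sum]]
      rw [Finset.sum_sub_distrib, ← half, Finset.mul_sum]
    rw [← e]; exact sum_nn
  rw [Complex.le_def] at this2 ⊢
  constructor
  · have h1 := this2.1
    simp only [Complex.sub_re, Complex.mul_re, Complex.zero_re] at h1 ⊢
    norm_num at h1
    linarith
  · have h1 := this2.2
    simp only [Complex.sub_im, Complex.mul_im, Complex.zero_im] at h1 ⊢
    norm_num at h1
    linarith

end Chan

lemma good_of_bare {P : Matrix (Fin n) (Fin n) ℂ → Matrix (Fin n) (Fin n) ℂ}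
    (h : IsBareChannel P) : GoodChan P := by
  obtain ⟨k, E, hE, hsum, hP⟩ := h
  set S : Fin k → Matrix (Fin n) (Fin n) ℂ := fun α => sq (hE α) with hSdef
  have hSpsd : ∀ α, (S α).PosSemidef := fun α => sq_psd (hE α)
  have hSh : ∀ α, (S α)ᴴ = S α := fun α => (hSpsd α).1
  have hsum' : ∑ α, S α * S α = 1 :=
    (Finset.sum_congr rfl (fun α _ => sq_mul_self (hE α))).trans hsum
  set Q : Matrix (Fin n) (Fin n) ℂ → Matrix (Fin n) (Fin n) ℂ :=
    fun Y => ∑ α, S α * Y * S α with hQdef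
  have hPQ : ∀ ρ, P ρ = Q ρ := hP
  have hQsub : ∀ X Y, Q (X - Y) = Q X - Q Y := by
    intro X Y
    simp [hQdef, Matrix.mul_sub, Matrix.sub_mul, Finset.sum_sub_distrib]
  have selfadj : ∀ X Y, ip Y (Q X) = ip (Q Y) X := fun X Y => chan_selfadj S hSh X Y
  have pos : ∀ X, 0 ≤ ip X (Q X) := fun X => chan_pos S hSpsd X
  have contr : ∀ X, ip X (Q X) ≤ ip X X := fun X => chan_contr S hSh hsum' X
  constructor
  · rw [hPQ 1]
    calc Q 1 = ∑ α, S α * S α := by simp [hQdef]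
    _ = 1 := hsum'
  intro X
  rw [hPQ X]
  have hb_eq : ip X (Q (Q X)) = ip (Q X) (Q X) := selfadj (Q X) X
  have hY0 : ip (X - Q X) (Q (X - Q X))
      = ip X (Q X) - 2 * ip (Q X) (Q X) + ip (Q X) (Q (Q X)) := by
    rw [hQsub, ip_sub_left, ip_sub_right, ip_sub_right, hb_eq]
    ring
  have h1 : 0 ≤ ip (X - Q X) (Q (X - Q X)) := pos _
  have h2 : ip (Q X) (Q (Q X)) ≤ ip (Q X) (Q X) := contr (Q X)
  have hba : ip (Q X) (Q X) ≤ ip X (Q X) := by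
    have hd : 0 ≤ ip X (Q X) - ip (Q X) (Q X) := by
      have := add_nonneg h1 (sub_nonneg.mpr h2)
      rw [hY0] at this
      calc (0:ℂ) ≤ ip X (Q X) - 2 * ip (Q X) (Q X) + ip (Q X) (Q (Q X))
            + (ip (Q X) (Q X) - ip (Q X) (Q (Q X))) := this
      _ = ip X (Q X) - ip (Q X) (Q X) := by ring
    exact sub_nonneg.mp hd
  have hle : ip (Q X) (Q X) ≤ ip X X := le_trans hba (contr X)
  refine ⟨hle, ?_⟩
  intro heq
  have ha : ip X (Q X) = ip X X := le_antisymm (contr X) (heq ▸ hba)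
  have him : (ip X X).im = 0 := by
    have h0 := ip_self_nonneg X
    rw [Complex.le_def] at h0
    exact (h0.2).symm
  have hconj : starRingEnd ℂ (ip X X) = ip X X := by
    apply Complex.ext <;> simp [him]
  have hz : ip (X - Q X) (X - Q X) = 0 := by
    rw [ip_sub_left, ip_sub_right, ip_sub_right, heq, ha,
      show ip (Q X) X = starRingEnd ℂ (ip X (Q X)) from ip_conj X (Q X), ha, hconj]
    ring
  have := ip_self_eq_zero hz
  have h3 : X - Q X = 0 := this
  have := sub_eq_zero.mp h3
  exact this.symm

end Stmt9Aux

namespace Stmt9Aux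

variable {n : ℕ}

lemma good_comp {F g : Matrix (Fin n) (Fin n) ℂ → Matrix (Fin n) (Fin n) ℂ}
    (hF : GoodChan F) (hg : GoodChan g) : GoodChan (F ∘ g) := by
  obtain ⟨hF1, hFq⟩ := hF
  obtain ⟨hg1, hgq⟩ := hg
  refine ⟨by simp [Function.comp, hg1, hF1], fun X => ?_⟩
  have h1 : ip (F (g X)) (F (g X)) ≤ ip (g X) (g X) := (hFq (g X)).1
  have h2 : ip (g X) (g X) ≤ ip X X := (hgq X).1
  refine ⟨le_trans h1 h2, fun heq => ?_⟩
  have h3 : ip (g X) (g X) = ip X X := le_antisymm h2 (heq ▸ h1)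
  have h4 : g X = X := (hgq X).2 h3
  simp only [Function.comp_apply, h4] at heq ⊢
  exact (hFq X).2 heq

lemma foldl_comp_eq (l : List (Matrix (Fin n) (Fin n) ℂ → Matrix (Fin n) (Fin n) ℂ))
    (f : Matrix (Fin n) (Fin n) ℂ → Matrix (Fin n) (Fin n) ℂ) :
    l.foldl (fun f g => g ∘ f) f = (l.foldl (fun f g => g ∘ f) id) ∘ f := by
  induction l generalizing f with
  | nil => simp [List.foldl]
  | cons g l ih =>
      simp only [List.foldl_cons]
      rw [ih (g ∘ f), ih (g ∘ id)]
      rfl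

lemma good_fold (l : List (Matrix (Fin n) (Fin n) ℂ → Matrix (Fin n) (Fin n) ℂ))
    (h : ∀ g ∈ l, GoodChan g) : GoodChan (l.foldl (fun f g => g ∘ f) id) := by
  induction l with
  | nil => exact ⟨rfl, fun X => ⟨le_refl _, fun _ => rfl⟩⟩
  | cons g l ih =>
      simp only [List.foldl_cons]
      rw [foldl_comp_eq]
      have hg : GoodChan (g ∘ id) := by
        simpa using h g List.mem_cons_self
      exact good_comp (ih (fun g' hg' => h g' (List.mem_cons_of_mem _ hg'))) hg

end Stmt9Aux

theorem stmt_9 (n N : ℕ) (hn : 0 < n)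
    (Φs : Fin N → (Matrix (Fin n) (Fin n) ℂ → Matrix (Fin n) (Fin n) ℂ))
    (hbare : ∀ i, IsBareChannel (Φs i))
    (Φ : Matrix (Fin n) (Fin n) ℂ → Matrix (Fin n) (Fin n) ℂ)
    (hΦ : Φ = (List.ofFn Φs).foldl (fun f g => g ∘ f) id)
    (Φbar : Matrix (Fin n) (Fin n) ℂ → Matrix (Fin n) (Fin n) ℂ)
    (hΦbar : ∀ ρ, Φbar ρ =
      (Φ (ρ.map (starRingEnd ℂ))).map (starRingEnd ℂ)) :
    ¬ ∃ U : Matrix (Fin n) (Fin n) ℂ →ₗ[ℂ] Matrix (Fin n) (Fin n) ℂ,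
        Function.Bijective U ∧ ∀ ρ, U (Φbar ρ) = -(Φ (U ρ)) := by
  rintro ⟨U, hUbij, hUcomm⟩
  have hgood : Stmt9Aux.GoodChan Φ := by
    rw [hΦ]
    apply Stmt9Aux.good_fold
    intro g hg
    obtain ⟨i, hi⟩ := List.mem_ofFn.mp hg
    exact hi ▸ Stmt9Aux.good_of_bare (hbare i)
  have hone : (1 : Matrix (Fin n) (Fin n) ℂ).map (starRingEnd ℂ) = 1 :=
    Matrix.map_one _ (map_zero _) (map_one _)
  have hbar1 : Φbar 1 = 1 := by
    rw [hΦbar, hone, hgood.1, hone]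
  have hA : U 1 = -(Φ (U 1)) := by
    have := hUcomm 1
    rwa [hbar1] at this
  have hPhiA : Φ (U 1) = -(U 1) := by
    have h := congrArg (fun x => -x) hA
    simp only [neg_neg] at h
    exact h.symm
  have hipeq : ip (Φ (U 1)) (Φ (U 1)) = ip (U 1) (U 1) := by
    rw [hPhiA]
    simp [ip]
  have hfix : Φ (U 1) = U 1 := (hgood.2 (U 1)).2 hipeq
  have hzero : U 1 = 0 := by
    have h2 : U 1 = -(U 1) := hfix.symm.trans hPhiA
    have : U 1 + U 1 = 0 := add_eq_zero_iff_eq_neg.mpr h2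
    have h3 : (2 : ℂ) • (U 1) = 0 := by rw [two_smul]; exact this
    rcases smul_eq_zero.mp h3 with h | h
    · norm_num at h
    · exact h
  have h10 : (1 : Matrix (Fin n) (Fin n) ℂ) = 0 := by
    apply hUbij.1
    rw [hzero, map_zero]
  haveI : Nonempty (Fin n) := Fin.pos_iff_nonempty.mp hn
  exact one_ne_zero h10
end
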